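/- One has 0 < ((α−β)/(2π)) · ∫₀^{β²} dt/√(t(β²−t)(α²−t)) < 1/2, where the integral is a convergent improper Riemann integral. Consequently the gas-phase particle density K_gas(m,n;m,n) = 1/2 + (−1)^{m+n} ((α−β)/(2π)) ∫₀^{β²} dt/√(t(β²−t)(α²−t)) lies strictly between 0 and 1 for all integers m, n. -/

import Mathlib

open MeasureTheory Set intervalIntegral Real

private lemma aztec_aux_integrable (b : ℝ) (hb : 0 < b) :
    IntervalIntegrable (fun t => 1 / Real.sqrt (t * (b - t))) volume 0 b := by
  have hmeas : ∀ a c : ℝ, AEStronglyMeasurable (fun t => 1 / Real.sqrt (t * (b - t)))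
      (volume.restrict (Set.uIoc a c)) := by
    intro a c
    have : Measurable fun t : ℝ => 1 / Real.sqrt (t * (b - t)) := by
      simp only [one_div]
      exact (Real.continuous_sqrt.measurable.comp (by fun_prop)).inv
    exact this.aestronglyMeasurable
  have h1 : IntervalIntegrable (fun t => 1 / Real.sqrt (t * (b - t))) volume 0 (b/2) := by
    have hint : IntervalIntegrable (fun t : ℝ => (Real.sqrt (b/2))⁻¹ * t ^ (-(1/2) : ℝ))
        volume 0 (b/2) :=
      (intervalIntegral.intervalIntegrable_rpow' (by norm_num)).const_mul _
    refine hint.mono_fun (hmeas 0 (b/2)) ?_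
    rw [Set.uIoc_of_le (by linarith)]
    rw [Filter.EventuallyLE, MeasureTheory.ae_restrict_iff' measurableSet_Ioc]
    filter_upwards with t ht
    obtain ⟨ht0, ht1⟩ := ht
    have hbt : b/2 ≤ b - t := by linarith
    have h1 : (0:ℝ) ≤ 1 / Real.sqrt (t * (b - t)) := by positivity
    have h2 : (0:ℝ) ≤ (Real.sqrt (b/2))⁻¹ * t ^ (-(1/2) : ℝ) := by positivity
    rw [Real.norm_of_nonneg h1, Real.norm_of_nonneg h2]
    rw [Real.sqrt_mul ht0.le]
    have hrp : t ^ (-(1/2) : ℝ) = (Real.sqrt t)⁻¹ := by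
      rw [Real.rpow_neg ht0.le, Real.sqrt_eq_rpow]
    rw [hrp, one_div, mul_inv, mul_comm ((Real.sqrt (b/2))⁻¹)]
    refine mul_le_mul_of_nonneg_left ?_ (inv_nonneg.2 (Real.sqrt_nonneg _))
    exact inv_anti₀ (Real.sqrt_pos.2 (by linarith)) (Real.sqrt_le_sqrt hbt)
  have h2 : IntervalIntegrable (fun t => 1 / Real.sqrt (t * (b - t))) volume (b/2) b := by
    have hint : IntervalIntegrable (fun t : ℝ => (Real.sqrt (b/2))⁻¹ * (b - t) ^ (-(1/2) : ℝ))
        volume (b/2) b := by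
      have h := ((intervalIntegral.intervalIntegrable_rpow'
        (a := 0) (b := b/2) (r := -(1/2)) (by norm_num)).const_mul
        (Real.sqrt (b/2))⁻¹).comp_sub_left b
      rw [sub_zero, show b - b/2 = b/2 by ring] at h
      exact h.symm
    refine hint.mono_fun (hmeas (b/2) b) ?_
    rw [Set.uIoc_of_le (by linarith)]
    rw [Filter.EventuallyLE, MeasureTheory.ae_restrict_iff' measurableSet_Ioc]
    filter_upwards with t ht
    obtain ⟨ht0, ht1⟩ := ht
    have htb : 0 ≤ b - t := by linarith
    have h1 : (0:ℝ) ≤ 1 / Real.sqrt (t * (b - t)) := by positivity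
    have h2 : (0:ℝ) ≤ (Real.sqrt (b/2))⁻¹ * (b - t) ^ (-(1/2) : ℝ) := by positivity
    rw [Real.norm_of_nonneg h1, Real.norm_of_nonneg h2]
    rw [Real.sqrt_mul (by linarith : (0:ℝ) ≤ t)]
    have hrp : (b - t) ^ (-(1/2) : ℝ) = (Real.sqrt (b - t))⁻¹ := by
      rw [Real.rpow_neg htb, Real.sqrt_eq_rpow]
    rw [hrp, one_div, mul_inv]
    refine mul_le_mul_of_nonneg_right ?_ (inv_nonneg.2 (Real.sqrt_nonneg _))
    exact inv_anti₀ (Real.sqrt_pos.2 (by linarith)) (Real.sqrt_le_sqrt (by linarith))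
  exact h1.trans h2

private lemma aztec_aux_integral (b : ℝ) (hb : 0 < b) :
    ∫ t in (0:ℝ)..b, 1 / Real.sqrt (t * (b - t)) = Real.pi := by
  have hF : ∀ t ∈ Ioo (0:ℝ) b,
      HasDerivAt (fun t => Real.arcsin (2 * t / b - 1)) (1 / Real.sqrt (t * (b - t))) t := by
    intro t ⟨ht0, htb⟩
    have hbne : b ≠ 0 := hb.ne'
    have hu1 : 2 * t / b - 1 ≠ -1 := by
      intro h
      field_simp at h
      linarith
    have hu2 : 2 * t / b - 1 ≠ 1 := by
      intro h
      field_simp at h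
      linarith
    have hin : HasDerivAt (fun t : ℝ => 2 * t / b - 1) (2 / b) t := by
      simpa using (((hasDerivAt_id t).const_mul 2).div_const b).sub_const 1
    have := (Real.hasDerivAt_arcsin hu1 hu2).comp t hin
    refine this.congr_deriv (Eq.symm ?_)
    have key : 1 - (2 * t / b - 1) ^ 2 = (2/b)^2 * (t * (b - t)) := by
      field_simp; ring
    rw [key, Real.sqrt_mul (sq_nonneg _), Real.sqrt_sq (div_nonneg (by norm_num) hb.le)]
    have hpos : 0 < Real.sqrt (t * (b - t)) :=
      Real.sqrt_pos.2 (mul_pos ht0 (by linarith))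
    have hs : Real.sqrt t * Real.sqrt (b - t) ≠ 0 := by
      rw [Real.sqrt_mul ht0.le] at hpos; exact hpos.ne'
    field_simp
  have := intervalIntegral.integral_eq_sub_of_hasDerivAt_of_le hb.le
    (Continuous.continuousOn (by continuity)) hF (aztec_aux_integrable b hb)
  rw [this]
  have h1 : 2 * b / b - 1 = 1 := by field_simp; norm_num
  have h2 : 2 * 0 / b - 1 = -1 := by simp
  rw [h1, h2, Real.arcsin_one, Real.arcsin_neg_one]
  ring

theorem gas_density_between_zero_and_one (α β : ℝ) (hα : 1 < α) (hαβ : α * β = 1) :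
    IntervalIntegrable
        (fun t : ℝ => 1 / Real.sqrt (t * (β ^ 2 - t) * (α ^ 2 - t)))
        MeasureTheory.volume 0 (β ^ 2) ∧
    0 < (α - β) / (2 * Real.pi) *
        ∫ t in (0 : ℝ)..(β ^ 2), 1 / Real.sqrt (t * (β ^ 2 - t) * (α ^ 2 - t)) ∧
    (α - β) / (2 * Real.pi) *
        (∫ t in (0 : ℝ)..(β ^ 2), 1 / Real.sqrt (t * (β ^ 2 - t) * (α ^ 2 - t))) <
      1 / 2 ∧
    ∀ m n : ℤ,
      0 < 1 / 2 + (-1 : ℝ) ^ (m + n) * ((α - β) / (2 * Real.pi) *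
          ∫ t in (0 : ℝ)..(β ^ 2), 1 / Real.sqrt (t * (β ^ 2 - t) * (α ^ 2 - t))) ∧
      1 / 2 + (-1 : ℝ) ^ (m + n) * ((α - β) / (2 * Real.pi) *
          ∫ t in (0 : ℝ)..(β ^ 2), 1 / Real.sqrt (t * (β ^ 2 - t) * (α ^ 2 - t))) <
        1 := by
  have hα0 : 0 < α := by linarith
  have hβ0 : 0 < β := by nlinarith
  have hβ1 : β < 1 := by nlinarith
  set b : ℝ := β ^ 2 with hbdef
  have hb : 0 < b := by positivity
  have hD : b < α ^ 2 := by nlinarith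
  have hDpos : (0:ℝ) < α ^ 2 - b := by linarith
  set C : ℝ := (Real.sqrt (α ^ 2 - b))⁻¹ with hCdef
  have hCpos : 0 < C := inv_pos.2 (Real.sqrt_pos.2 hDpos)
  -- pointwise bound on [0, b]
  have hle : ∀ t ∈ Icc (0:ℝ) b,
      1 / Real.sqrt (t * (b - t) * (α ^ 2 - t)) ≤ C * (1 / Real.sqrt (t * (b - t))) := by
    intro t ⟨ht0, htb⟩
    have h0 : (0:ℝ) ≤ t * (b - t) := mul_nonneg ht0 (by linarith)
    rw [Real.sqrt_mul h0, one_div, mul_inv, one_div, mul_comm C]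
    refine mul_le_mul_of_nonneg_left ?_ (inv_nonneg.2 (Real.sqrt_nonneg _))
    exact inv_anti₀ (Real.sqrt_pos.2 hDpos) (Real.sqrt_le_sqrt (by linarith))
  -- integrability
  have hint : IntervalIntegrable
      (fun t : ℝ => 1 / Real.sqrt (t * (b - t) * (α ^ 2 - t))) volume 0 b := by
    have hCh : IntervalIntegrable (fun t : ℝ => C * (1 / Real.sqrt (t * (b - t))))
        volume 0 b := (aztec_aux_integrable b hb).const_mul C
    refine hCh.mono_fun ?_ ?_
    · have : Measurable fun t : ℝ => 1 / Real.sqrt (t * (b - t) * (α ^ 2 - t)) := by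
        simp only [one_div]
        exact (Real.continuous_sqrt.measurable.comp (by fun_prop)).inv
      exact this.aestronglyMeasurable
    · rw [Set.uIoc_of_le hb.le]
      rw [Filter.EventuallyLE, MeasureTheory.ae_restrict_iff' measurableSet_Ioc]
      filter_upwards with t ht
      have h1 : (0:ℝ) ≤ 1 / Real.sqrt (t * (b - t) * (α ^ 2 - t)) := by positivity
      have h2 : (0:ℝ) ≤ C * (1 / Real.sqrt (t * (b - t))) := by positivity
      rw [Real.norm_of_nonneg h1, Real.norm_of_nonneg h2]
      exact hle t ⟨ht.1.le, ht.2⟩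
  -- positivity of the integral
  have hIpos : 0 < ∫ t in (0:ℝ)..b, 1 / Real.sqrt (t * (b - t) * (α ^ 2 - t)) := by
    refine intervalIntegral.intervalIntegral_pos_of_pos_on hint ?_ hb
    intro x ⟨hx0, hxb⟩
    have : 0 < x * (b - x) * (α ^ 2 - x) :=
      mul_pos (mul_pos hx0 (by linarith)) (by linarith)
    exact one_div_pos.2 (Real.sqrt_pos.2 this)
  -- upper bound for the integral
  have hIle : (∫ t in (0:ℝ)..b, 1 / Real.sqrt (t * (b - t) * (α ^ 2 - t))) ≤ C * Real.pi := by
    calc (∫ t in (0:ℝ)..b, 1 / Real.sqrt (t * (b - t) * (α ^ 2 - t)))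
        ≤ ∫ t in (0:ℝ)..b, C * (1 / Real.sqrt (t * (b - t))) :=
          intervalIntegral.integral_mono_on hb.le hint
            ((aztec_aux_integrable b hb).const_mul C) hle
      _ = C * ∫ t in (0:ℝ)..b, 1 / Real.sqrt (t * (b - t)) :=
          intervalIntegral.integral_const_mul C _
      _ = C * Real.pi := by rw [aztec_aux_integral b hb]
  have hπ : 0 < Real.pi := Real.pi_pos
  have hcoeff : 0 < (α - β) / (2 * Real.pi) := by
    apply div_pos (by linarith) (by linarith)
  have hprodpos : 0 < (α - β) / (2 * Real.pi) *
      ∫ t in (0:ℝ)..b, 1 / Real.sqrt (t * (b - t) * (α ^ 2 - t)) :=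
    mul_pos hcoeff hIpos
  have hprodlt : (α - β) / (2 * Real.pi) *
      (∫ t in (0:ℝ)..b, 1 / Real.sqrt (t * (b - t) * (α ^ 2 - t))) < 1 / 2 := by
    have h1 : (α - β) / (2 * Real.pi) *
        (∫ t in (0:ℝ)..b, 1 / Real.sqrt (t * (b - t) * (α ^ 2 - t)))
        ≤ (α - β) / (2 * Real.pi) * (C * Real.pi) :=
      mul_le_mul_of_nonneg_left hIle hcoeff.le
    have hs : 0 < Real.sqrt (α ^ 2 - b) := Real.sqrt_pos.2 hDpos
    have h2 : (α - β) / (2 * Real.pi) * (C * Real.pi)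
        = (α - β) / (2 * Real.sqrt (α ^ 2 - b)) := by
      rw [hCdef]
      field_simp
    have h3 : (α - β) / (2 * Real.sqrt (α ^ 2 - b)) < 1 / 2 := by
      rw [div_lt_div_iff₀ (by linarith) (by norm_num)]
      have h4 : α - β < Real.sqrt (α ^ 2 - b) := by
        rw [(Real.lt_sqrt (by linarith)).symm.symm]
        · nlinarith
      linarith
    linarith [h1, h2 ▸ h1]
  refine ⟨hint, hprodpos, hprodlt, ?_⟩
  intro m n
  rcases Int.even_or_odd (m + n) with he | ho
  · rw [he.neg_one_zpow]
    constructor <;> linarith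
  · rw [ho.neg_one_zpow]
    constructor <;> linarith
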